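/- Let q be a power of a prime p and f a positive integer with p ∤ f. Then there exists ω₀ ∈ F_q \ {0} such that ω₀ ∉ ℘(F_{q^f}), where ℘(x) = x^p − x. -/
import Mathlib

open Finset Polynomial

section AS_aux

variable {p r : ℕ}

lemma as_charP (p n : ℕ) (hp : p.Prime) (L : Type*) [Field L] [Fintype L]
    (_hn : 0 < n) (hL : Fintype.card L = p ^ n) : CharP L p := by
  have h1 : ringChar L ∣ p ^ n := by
    rw [← hL]
    exact ringChar.dvd (by exact_mod_cast FiniteField.cast_card_eq_zero L)
  have h2 : (ringChar L).Prime := CharP.char_is_prime L (ringChar L)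
  have h3 : ringChar L ∣ p := h2.dvd_of_dvd_pow h1
  have : ringChar L = p := (Nat.prime_dvd_prime_iff_eq h2 hp).mp h3
  exact ringChar.of_eq this

/-- Telescoping: if `x^p - x = c` in char `p`, then `∑_{j<n} c^(p^j) = x^(p^n) - x`. -/
lemma as_telescope {L : Type*} [Field L] (p : ℕ) [hp : Fact p.Prime] [CharP L p]
    (x : L) (n : ℕ) :
    ∑ j ∈ range n, (x ^ p - x) ^ p ^ j = x ^ p ^ n - x := by
  induction n with
  | zero => simp
  | succ n ih =>
    rw [Finset.sum_range_succ, ih, sub_pow_char_pow, ← pow_mul, ← pow_succ']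
    ring

lemma as_pow_block {L : Type*} [CommRing L] (p r : ℕ) (a : L) (ha : a ^ p ^ r = a) :
    ∀ m, a ^ p ^ (m * r) = a := by
  intro m
  induction m with
  | zero => simp
  | succ n ih =>
    rw [Nat.succ_mul, pow_add, pow_mul, ih, ha]

lemma as_sum_blocks {L : Type*} [CommRing L] (p r : ℕ) (a : L) (ha : a ^ p ^ r = a)
    (k : ℕ) : ∑ j ∈ Finset.range (k * r), a ^ p ^ j
      = k • ∑ j ∈ Finset.range r, a ^ p ^ j := by
  induction k with
  | zero => simp
  | succ n ih =>
    rw [Nat.succ_mul, Finset.sum_range_add, ih, succ_nsmul]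
    congr 1
    refine Finset.sum_congr rfl fun j hj => ?_
    have ha' : (a ^ p ^ j) ^ p ^ r = a ^ p ^ j := by
      rw [← pow_mul, mul_comm, pow_mul, ha]
    rw [pow_add, mul_comm (p ^ (n * r)), pow_mul, as_pow_block p r _ ha' n]

end AS_aux

/-- Let `q = p^r` be a power of a prime `p` and `f` a positive integer with `p ∤ f`.
Then there exists a nonzero `ω₀` in the field with `q` elements which is not in the
image of the Artin–Schreier map `x ↦ x^p − x` on the field with `q^f` elements. -/
theorem exists_nonzero_not_artin_schreier (p r f : ℕ) (hp : p.Prime) (hr : 0 < r)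
    (hf : 0 < f) (hpf : ¬ p ∣ f) (K M : Type*) [Field K] [Field M] [Fintype K]
    [Fintype M] (hK : Fintype.card K = p ^ r) (hM : Fintype.card M = (p ^ r) ^ f)
    (i : K →+* M) :
    ∃ ω₀ : K, ω₀ ≠ 0 ∧ ∀ x : M, x ^ p - x ≠ i ω₀ := by
  haveI : Fact p.Prime := ⟨hp⟩
  haveI hKp : CharP K p := as_charP p r hp K hr hK
  haveI hMp : CharP M p := as_charP p (r * f) hp M (by positivity)
    (by rw [hM, pow_mul])
  -- The K-trace polynomial
  set P : K[X] := ∑ j ∈ range r, (X : K[X]) ^ p ^ j with hP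
  have hPdeg : P.natDegree < Fintype.card K := by
    refine lt_of_le_of_lt (natDegree_sum_le_of_forall_le (n := p ^ (r-1)) _ _ ?_) ?_
    · intro j hj
      rw [Finset.mem_range] at hj
      rw [natDegree_X_pow]
      exact Nat.pow_le_pow_right hp.one_lt.le (by omega : j ≤ r - 1)
    · rw [hK]
      exact Nat.pow_lt_pow_right hp.one_lt (by omega)
  have hPne : P ≠ 0 := by
    intro h
    have hc : P.coeff 1 = 1 := by
      rw [hP, finset_sum_coeff]
      rw [Finset.sum_eq_single 0]
      · simp
      · intro j hj hj0
        rw [coeff_X_pow, if_neg]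
        have : 1 < p ^ j := Nat.one_lt_pow hj0 hp.one_lt
        omega
      · intro h0
        exact absurd (Finset.mem_range.mpr hr) h0
    rw [h] at hc
    simp at hc
  obtain ⟨ω₀, hω₀⟩ : ∃ a : K, P.eval a ≠ 0 := by
    by_contra h
    push_neg at h
    exact hPne (eq_zero_of_natDegree_lt_card_of_eval_eq_zero P Function.injective_id
      (fun a => h a) hPdeg)
  have hTr : P.eval ω₀ = ∑ j ∈ range r, ω₀ ^ p ^ j := by
    simp [hP, eval_finset_sum]
  refine ⟨ω₀, ?_, ?_⟩
  · rintro rfl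
    apply hω₀
    rw [hTr]
    apply Finset.sum_eq_zero
    intro j _
    exact zero_pow (pow_ne_zero j hp.ne_zero)
  · intro x hx
    -- trace over M of i ω₀ is zero by telescoping
    have h0 : ∑ j ∈ range (r * f), (i ω₀) ^ p ^ j = 0 := by
      have ht := as_telescope p x (r * f)
      rw [hx] at ht
      rw [ht, pow_mul, ← hM, FiniteField.pow_card, sub_self]
    -- but it equals f • i (P.eval ω₀)
    have h1 : ∑ j ∈ range (r * f), (i ω₀) ^ p ^ j = f • i (P.eval ω₀) := by
      have ha : (i ω₀) ^ p ^ r = i ω₀ := by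
        rw [← map_pow, ← hK, FiniteField.pow_card]
      rw [mul_comm r f, as_sum_blocks p r (i ω₀) ha f, hTr, map_sum]
      simp [map_pow]
    rw [h1] at h0
    have hfne : (f : M) ≠ 0 := by
      rw [Ne, CharP.cast_eq_zero_iff M p]
      exact hpf
    have : i (P.eval ω₀) ≠ 0 := fun h => hω₀ (i.injective (by rw [h, map_zero]))
    rw [nsmul_eq_mul] at h0
    exact (mul_ne_zero hfne this) h0
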